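/- Let A be a d×d positive definite complex matrix and B, C d×d matrices such that both C − B†A⁻¹B and C − BA⁻¹B† are positive semidefinite, and suppose B†A⁻¹B = BA⁻¹B†. Setting X₁ = A^{1/2}, S = A^{−1/2}BA^{−1/2}, and choosing X₂ with X₂†X₂ = C − B†A⁻¹B, the block matrix [[A,B],[B†,C]] equals [[X₁†X₁, X₁†SX₁],[X₁†S†X₁, X₁†S†SX₁ + X₂†X₂]] and the SPPT condition X₁†S†SX₁ = X₁†SS†X₁ holds. -/

import Mathlib

open Matrix Kronecker Finset ComplexOrder

/-- 2x2 block matrix with n×n blocks, indexed by `Fin 2 × n`. -/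
def blk {n : Type*} (A B C D : Matrix n n ℂ) :
    Matrix (Fin 2 × n) (Fin 2 × n) ℂ := fun p q =>
  if p.1 = 0 then (if q.1 = 0 then A p.2 q.2 else B p.2 q.2)
  else (if q.1 = 0 then C p.2 q.2 else D p.2 q.2)

/-- Partial transpose on the first (qubit) factor. -/
def ptA {n : Type*} (ρ : Matrix (Fin 2 × n) (Fin 2 × n) ℂ) :
    Matrix (Fin 2 × n) (Fin 2 × n) ℂ := fun p q => ρ (q.1, p.2) (p.1, q.2)

/-- Separability of an (unnormalized) state on ℂ²⊗ℂⁿ. -/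
def SepState {n : Type*} [Fintype n] (ρ : Matrix (Fin 2 × n) (Fin 2 × n) ℂ) : Prop :=
  ∃ (N : ℕ) (σ : Fin N → Matrix (Fin 2) (Fin 2) ℂ) (P : Fin N → Matrix n n ℂ),
    (∀ i, (σ i).PosSemidef) ∧ (∀ i, (P i).PosSemidef) ∧ ρ = ∑ i, σ i ⊗ₖ P i

/-- The positive semidefinite square root of a positive semidefinite matrix
(the definition `Matrix.PosSemidef.sqrt` of the older Mathlib, since removed). -/
noncomputable def Matrix.PosSemidef.sqrt {n : Type*} [Fintype n] [DecidableEq n] {𝕜 : Type*}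
    [RCLike 𝕜] {A : Matrix n n 𝕜} (hA : A.PosSemidef) : Matrix n n 𝕜 :=
  hA.1.eigenvectorUnitary.1 * diagonal ((↑) ∘ (√·) ∘ hA.1.eigenvalues) *
  (star hA.1.eigenvectorUnitary : Matrix n n 𝕜)

theorem Matrix.PosSemidef.posSemidef_sqrt {n : Type*} [Fintype n] [DecidableEq n] {𝕜 : Type*}
    [RCLike 𝕜] {A : Matrix n n 𝕜} (hA : A.PosSemidef) : hA.sqrt.PosSemidef := by
  unfold Matrix.PosSemidef.sqrt
  have hd : (diagonal ((↑) ∘ (√·) ∘ hA.1.eigenvalues : n → 𝕜)).PosSemidef :=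
    posSemidef_diagonal_iff.mpr (fun i => by
      simp only [Function.comp_apply]; exact RCLike.ofReal_nonneg.mpr (Real.sqrt_nonneg _))
  have := hd.mul_mul_conjTranspose_same (hA.1.eigenvectorUnitary : Matrix n n 𝕜)
  simpa [star_eq_conjTranspose] using this

theorem Matrix.PosSemidef.sqrt_mul_self {n : Type*} [Fintype n] [DecidableEq n] {𝕜 : Type*}
    [RCLike 𝕜] {A : Matrix n n 𝕜} (hA : A.PosSemidef) : hA.sqrt * hA.sqrt = A := by
  unfold Matrix.PosSemidef.sqrt
  conv_rhs => rw [hA.1.spectral_theorem, Unitary.conjStarAlgAut_apply]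
  simp only [Matrix.mul_assoc]
  rw [← Matrix.mul_assoc (star (hA.1.eigenvectorUnitary : Matrix n n 𝕜))
    (hA.1.eigenvectorUnitary : Matrix n n 𝕜),
    Unitary.star_mul_self_of_mem hA.1.eigenvectorUnitary.2, Matrix.one_mul,
    ← Matrix.mul_assoc (diagonal _) (diagonal _), diagonal_mul_diagonal]
  congr 3
  funext i
  simp only [Function.comp_apply]
  rw [← RCLike.ofReal_mul, Real.mul_self_sqrt (hA.eigenvalues_nonneg i)]

theorem stmt19 {d : ℕ} (A B C : Matrix (Fin d) (Fin d) ℂ) (hA : A.PosDef)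
    (h1 : (C - Bᴴ * A⁻¹ * B).PosSemidef)
    (h2 : (C - B * A⁻¹ * Bᴴ).PosSemidef)
    (hcond : Bᴴ * A⁻¹ * B = B * A⁻¹ * Bᴴ)
    (X₁ S X₂ : Matrix (Fin d) (Fin d) ℂ)
    (hX₁ : X₁ = hA.posSemidef.sqrt)
    (hS : S = X₁⁻¹ * B * X₁⁻¹)
    (hX₂ : X₂ = h1.sqrt) :
    blk A B Bᴴ C =
      blk (X₁ᴴ * X₁) (X₁ᴴ * S * X₁) (X₁ᴴ * Sᴴ * X₁)
        (X₁ᴴ * Sᴴ * S * X₁ + X₂ᴴ * X₂) ∧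
    X₁ᴴ * Sᴴ * S * X₁ = X₁ᴴ * S * Sᴴ * X₁ := by
  have hH : X₁ᴴ = X₁ := by rw [hX₁]; exact hA.posSemidef.posSemidef_sqrt.1
  have hsq : X₁ * X₁ = A := by rw [hX₁]; exact hA.posSemidef.sqrt_mul_self
  have hdet : IsUnit X₁.det := by
    have : IsUnit A.det := (Matrix.isUnit_iff_isUnit_det A).mp hA.isUnit
    rw [← hsq, det_mul] at this
    exact (IsUnit.mul_iff.mp this).1
  have hinv : X₁⁻¹ * X₁ = 1 := nonsing_inv_mul _ hdet
  have hinv' : X₁ * X₁⁻¹ = 1 := mul_nonsing_inv _ hdet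
  have hAinv : X₁⁻¹ * X₁⁻¹ = A⁻¹ := by rw [← hsq, Matrix.mul_inv_rev]
  have hSH : Sᴴ = X₁⁻¹ * Bᴴ * X₁⁻¹ := by
    rw [hS]
    simp [conjTranspose_mul, conjTranspose_nonsing_inv, hH, Matrix.mul_assoc]
  have hL : X₁ * Sᴴ = Bᴴ * X₁⁻¹ := by
    rw [hSH, ← Matrix.mul_assoc, ← Matrix.mul_assoc, hinv', Matrix.one_mul]
  have hR : S * X₁ = X₁⁻¹ * B := by
    rw [hS, Matrix.mul_assoc, hinv, Matrix.mul_one]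
  have hL2 : X₁ * S = B * X₁⁻¹ := by
    rw [hS, ← Matrix.mul_assoc, ← Matrix.mul_assoc, hinv', Matrix.one_mul]
  have hR2 : Sᴴ * X₁ = X₁⁻¹ * Bᴴ := by
    rw [hSH, Matrix.mul_assoc, hinv, Matrix.mul_one]
  have hA' : X₁ᴴ * X₁ = A := by rw [hH, hsq]
  have hB' : X₁ᴴ * S * X₁ = B := by
    rw [hH, Matrix.mul_assoc, hR, ← Matrix.mul_assoc, hinv', Matrix.one_mul]
  have hBH' : X₁ᴴ * Sᴴ * X₁ = Bᴴ := by
    rw [hH, Matrix.mul_assoc, hR2, ← Matrix.mul_assoc, hinv', Matrix.one_mul]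
  have hSdS : X₁ᴴ * Sᴴ * S * X₁ = Bᴴ * A⁻¹ * B := by
    rw [hH, hL, Matrix.mul_assoc, hR, Matrix.mul_assoc Bᴴ X₁⁻¹,
      ← Matrix.mul_assoc X₁⁻¹ X₁⁻¹ B, hAinv, ← Matrix.mul_assoc]
  have hSSd : X₁ᴴ * S * Sᴴ * X₁ = B * A⁻¹ * Bᴴ := by
    rw [hH, hL2, Matrix.mul_assoc, hR2, Matrix.mul_assoc B X₁⁻¹,
      ← Matrix.mul_assoc X₁⁻¹ X₁⁻¹ Bᴴ, hAinv, ← Matrix.mul_assoc]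
  have hX2 : X₂ᴴ * X₂ = C - Bᴴ * A⁻¹ * B := by
    rw [hX₂, h1.posSemidef_sqrt.1, h1.sqrt_mul_self]
  have hD : X₁ᴴ * Sᴴ * S * X₁ + X₂ᴴ * X₂ = C := by
    rw [hSdS, hX2]; abel
  refine ⟨by rw [hA', hB', hBH', hD], by rw [hSdS, hSSd, hcond]⟩
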